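/- Let P and Q be 3×3 complex matrices with P² = Q² = 0 and Tr(PQ) = ω ≠ 0. Then there exists an invertible 3×3 complex matrix g such that g⁻¹Pg has a 1 in the (1,3) entry and zeros elsewhere, and g⁻¹Qg has ω in the (3,1) entry and zeros elsewhere. -/

import Mathlib

open Matrix

/-- A 3×3 complex matrix squaring to zero factors as a rank-one product. -/
lemma sq_zero_factor_aux (A : Matrix (Fin 3) (Fin 3) ℂ) (hA : A * A = 0) :
    ∃ u v : Fin 3 → ℂ, ∀ i j, A i j = u i * v j := by
  have hr : LinearMap.range A.mulVecLin ≤ LinearMap.ker A.mulVecLin := by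
    rintro w ⟨z, rfl⟩
    simp only [LinearMap.mem_ker, Matrix.mulVecLin_apply, Matrix.mulVec_mulVec, hA,
      Matrix.zero_mulVec]
  have hfin : Module.finrank ℂ (LinearMap.range A.mulVecLin) ≤ 1 := by
    have h1 : Module.finrank ℂ (LinearMap.range A.mulVecLin) ≤
        Module.finrank ℂ (LinearMap.ker A.mulVecLin) := Submodule.finrank_mono hr
    have h2 := LinearMap.finrank_range_add_finrank_ker A.mulVecLin
    have h3 : Module.finrank ℂ (Fin 3 → ℂ) = 3 := by simp
    omega
  have hp : (LinearMap.range A.mulVecLin).IsPrincipal :=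
    (Submodule.finrank_le_one_iff_isPrincipal _).mp hfin
  obtain ⟨u, hu⟩ := hp.principal
  have hcol : ∀ j : Fin 3, ∃ c : ℂ, A.mulVec (Pi.single j 1) = c • u := by
    intro j
    have hm : A.mulVec (Pi.single j 1) ∈ LinearMap.range A.mulVecLin := ⟨_, rfl⟩
    rw [hu, Submodule.mem_span_singleton] at hm
    obtain ⟨c, hc⟩ := hm
    exact ⟨c, hc.symm⟩
  choose v hv using hcol
  refine ⟨u, v, fun i j => ?_⟩
  have h := congrFun (hv j) i
  simp only [Matrix.mulVec_single, mul_one, Pi.smul_apply, smul_eq_mul, MulOpposite.op_one,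
    one_smul, Matrix.col_apply] at h
  rw [h, mul_comm]

/-- If `P, Q` are 3×3 complex matrices with `P² = Q² = 0` and
`Tr(PQ) = ω ≠ 0`, then there is an invertible `g` conjugating `P` to the matrix
with a single `1` in the (1,3) entry and `Q` to the matrix with single entry `ω`
in the (3,1) entry. -/
theorem stmt0 (P Q : Matrix (Fin 3) (Fin 3) ℂ) (ω : ℂ)
    (hP : P * P = 0) (hQ : Q * Q = 0)
    (hω : (P * Q).trace = ω) (hω0 : ω ≠ 0) :
    ∃ g : Matrix (Fin 3) (Fin 3) ℂ, IsUnit g ∧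
      g⁻¹ * P * g = !![0, 0, 1; 0, 0, 0; 0, 0, 0] ∧
      g⁻¹ * Q * g = !![0, 0, 0; 0, 0, 0; ω, 0, 0] := by
  obtain ⟨u, v, hPf⟩ := sq_zero_factor_aux P hP
  obtain ⟨x, y, hQf⟩ := sq_zero_factor_aux Q hQ
  set s : ℂ := v ⬝ᵥ x with hs_def
  set t : ℂ := y ⬝ᵥ u with ht_def
  have hst : s * t = ω := by
    rw [← hω]
    simp only [hs_def, ht_def, Matrix.trace, Matrix.diag, Matrix.mul_apply, hPf, hQf,
      dotProduct, Fin.sum_univ_three]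
    ring
  have hs : s ≠ 0 := left_ne_zero_of_mul (hst ▸ hω0)
  have ht : t ≠ 0 := right_ne_zero_of_mul (hst ▸ hω0)
  have hu0 : u ≠ 0 := by
    intro h; apply ht; simp [ht_def, h]
  have hx0 : x ≠ 0 := by
    intro h; apply hs; simp [hs_def, h]
  have hv0 : v ≠ 0 := by
    intro h; apply hs; simp [hs_def, h]
  -- the factor dot products vanish since P² = Q² = 0
  have hvu : v ⬝ᵥ u = 0 := by
    obtain ⟨i, hi⟩ : ∃ i, u i ≠ 0 := by
      by_contra h; push_neg at h
      exact ht (by simp [ht_def, dotProduct, h])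
    obtain ⟨j, hj⟩ : ∃ j, v j ≠ 0 := by
      by_contra h; push_neg at h
      exact hs (by simp [hs_def, dotProduct, h])
    have h0 : (P * P) i j = 0 := by rw [hP]; rfl
    rw [Matrix.mul_apply] at h0
    have key : u i * v j * (v ⬝ᵥ u) = 0 := by
      rw [← h0]
      simp only [hPf, dotProduct, Fin.sum_univ_three]
      ring
    rcases mul_eq_zero.mp key with h | h
    · exact absurd h (mul_ne_zero hi hj)
    · exact h
  have hyx : y ⬝ᵥ x = 0 := by
    obtain ⟨i, hi⟩ : ∃ i, x i ≠ 0 := by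
      by_contra h; push_neg at h
      exact hs (by simp [hs_def, dotProduct, h])
    obtain ⟨j, hj⟩ : ∃ j, y j ≠ 0 := by
      by_contra h; push_neg at h
      exact ht (by simp [ht_def, dotProduct, h])
    have h0 : (Q * Q) i j = 0 := by rw [hQ]; rfl
    rw [Matrix.mul_apply] at h0
    have key : x i * y j * (y ⬝ᵥ x) = 0 := by
      rw [← h0]
      simp only [hQf, dotProduct, Fin.sum_univ_three]
      ring
    rcases mul_eq_zero.mp key with h | h
    · exact absurd h (mul_ne_zero hi hj)
    · exact h
  -- rank one matrices act on vectors by dot products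
  have hmul : ∀ (A : Matrix (Fin 3) (Fin 3) ℂ) (a b w : Fin 3 → ℂ),
      (∀ i j, A i j = a i * b j) → A *ᵥ w = (b ⬝ᵥ w) • a := by
    intro A a b w h
    funext i
    simp only [Matrix.mulVec, dotProduct, h, Fin.sum_univ_three, Pi.smul_apply, smul_eq_mul]
    ring
  -- the columns of the conjugating matrix
  set c1 : Fin 3 → ℂ := s • u with hc1_def
  set c2 : Fin 3 → ℂ := crossProduct v y with hc2_def
  set c3 : Fin 3 → ℂ := x with hc3_def
  set g : Matrix (Fin 3) (Fin 3) ℂ := Matrix.of (fun i j => ![c1, c2, c3] j i) with hg_def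
  have hP1 : P *ᵥ c1 = 0 := by
    rw [hc1_def, hmul P u v _ hPf, dotProduct_smul, hvu]; simp
  have hP2 : P *ᵥ c2 = 0 := by
    rw [hc2_def, hmul P u v _ hPf, dot_self_cross]; simp
  have hP3 : P *ᵥ c3 = c1 := by
    rw [hc3_def, hmul P u v _ hPf, hc1_def]
  have hQ1 : Q *ᵥ c1 = ω • c3 := by
    have hdot : y ⬝ᵥ (s • u) = ω := by
      rw [dotProduct_smul, ← ht_def, smul_eq_mul, hst]
    rw [hc1_def, hmul Q x y _ hQf, hdot, hc3_def]
  have hQ2 : Q *ᵥ c2 = 0 := by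
    rw [hc2_def, hmul Q x y _ hQf, dot_cross_self]; simp
  have hQ3 : Q *ᵥ c3 = 0 := by
    rw [hc3_def, hmul Q x y _ hQf, hyx]; simp
  -- the intertwining identities
  have hcol : ∀ (A : Matrix (Fin 3) (Fin 3) ℂ) (i : Fin 3) (j : Fin 3),
      (A * g) i j = (A *ᵥ (![c1, c2, c3] j)) i := by
    intro A i j
    simp [Matrix.mul_apply, Matrix.mulVec, dotProduct, hg_def]
  have hPg : P * g = g * !![0, 0, 1; 0, 0, 0; 0, 0, 0] := by
    ext i j
    rw [hcol]
    fin_cases j <;>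
      simp [Matrix.mul_apply, hg_def, Fin.sum_univ_three, hP1, hP2, hP3, Matrix.vecHead,
        Matrix.vecTail]
  have hQg : Q * g = g * !![0, 0, 0; 0, 0, 0; ω, 0, 0] := by
    ext i j
    rw [hcol]
    fin_cases j
    · simp [Matrix.mul_apply, hg_def, Fin.sum_univ_three, hQ1, mul_comm]
    · simp [Matrix.mul_apply, hg_def, Fin.sum_univ_three, hQ2]
    · simp [Matrix.mul_apply, hg_def, Fin.sum_univ_three, hQ3, Matrix.vecHead, Matrix.vecTail]
  -- invertibility of g
  have hc1ne : c1 ≠ 0 := by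
    rw [hc1_def]; exact smul_ne_zero hs hu0
  have hc2ne : c2 ≠ 0 := by
    rw [hc2_def]
    rw [crossProduct_ne_zero_iff_linearIndependent]
    rw [LinearIndependent.pair_iff' hv0]
    intro a ha
    apply ht
    rw [ht_def, ← ha, smul_dotProduct, hvu, smul_eq_mul, mul_zero]
  have hdet : g.det ≠ 0 := by
    intro h
    obtain ⟨w, hw0, hww⟩ := (Matrix.exists_mulVec_eq_zero_iff).mpr h
    have hG : g *ᵥ w = w 0 • c1 + w 1 • c2 + w 2 • c3 := by
      funext i
      simp only [Matrix.mulVec, dotProduct, hg_def, Matrix.of_apply, Fin.sum_univ_three,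
        Pi.add_apply, Pi.smul_apply, smul_eq_mul]
      simp [Matrix.cons_val_zero, Matrix.cons_val_one]
      ring
    rw [hG] at hww
    have hw2 : w 0 = 0 := by
      have h1 := congrArg (fun z => Q *ᵥ z) hww
      simp only [Matrix.mulVec_add, Matrix.mulVec_smul, hQ1, hQ2, hQ3, smul_zero,
        add_zero, Matrix.mulVec_zero, smul_smul] at h1
      rcases smul_eq_zero.mp h1 with h | h
      · rcases mul_eq_zero.mp h with h' | h'
        · exact h'
        · exact absurd h' hω0
      · exact absurd h hx0
    have hw3 : w 2 = 0 := by
      have h1 := congrArg (fun z => P *ᵥ z) hww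
      simp only [Matrix.mulVec_add, Matrix.mulVec_smul, hP1, hP2, hP3, smul_zero,
        zero_add, add_zero, Matrix.mulVec_zero] at h1
      rcases smul_eq_zero.mp h1 with h | h
      · exact h
      · exact absurd h hc1ne
    have hw1 : w 1 = 0 := by
      rw [hw2, hw3] at hww
      simp only [zero_smul, zero_add, add_zero] at hww
      rcases smul_eq_zero.mp hww with h | h
      · exact h
      · exact absurd h hc2ne
    apply hw0
    funext i
    fin_cases i
    · exact hw2
    · exact hw1
    · exact hw3
  have hgu : IsUnit g := (Matrix.isUnit_iff_isUnit_det g).mpr (isUnit_iff_ne_zero.mpr hdet)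
  refine ⟨g, hgu, ?_, ?_⟩
  · rw [mul_assoc, hPg, ← mul_assoc, Matrix.nonsing_inv_mul g (isUnit_iff_ne_zero.mpr hdet),
      one_mul]
  · rw [mul_assoc, hQg, ← mul_assoc, Matrix.nonsing_inv_mul g (isUnit_iff_ne_zero.mpr hdet),
      one_mul]
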